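/- Let q be a prime power, A ∈ GL₂(F_q) with [A] ≠ [I], let D be the order of [A] in PGL₂(F_q), and let m ≥ 1 with Dm > 2. Then a monic irreducible polynomial f ∈ F_q[x] of degree Dm satisfies [A]∘f = f if and only if f divides F_{A^j,m} for some integer j with 1 ≤ j ≤ D−1 and gcd(j,D) = 1. -/

import Mathlib

open Polynomial

noncomputable section

namespace PGLAct

variable {F : Type} [Field F]

/-- The composition `A ∘ f = ∑ aᵢ (a x + c)^i (b x + d)^{k-i}` for `A = [[a,b],[c,d]]`. -/
def mcirc (A : Matrix (Fin 2) (Fin 2) F) (f : F[X]) : F[X] :=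
  ∑ i ∈ Finset.range (f.natDegree + 1),
    C (f.coeff i) * (C (A 0 0) * X + C (A 1 0)) ^ i *
      (C (A 0 1) * X + C (A 1 1)) ^ (f.natDegree - i)

/-- The composition `[A] ∘ f`: the monic normalization of `A ∘ f`. -/
def pcirc (A : Matrix (Fin 2) (Fin 2) F) (f : F[X]) : F[X] :=
  C (mcirc A f).leadingCoeff⁻¹ * mcirc A f

/-- The subgroup of scalar matrices in `GL₂(F)`. -/
def scalarSub (F : Type) [Field F] : Subgroup (GL (Fin 2) F) :=
  (Units.map ((Matrix.scalar (Fin 2)).toMonoidHom : F →* Matrix (Fin 2) (Fin 2) F)).range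

instance scalarSub_normal (F : Type) [Field F] : (scalarSub F).Normal := by
  constructor
  intro n hn g
  obtain ⟨u, hu⟩ := hn
  refine ⟨u, ?_⟩
  ext : 1
  have hcomm : Commute ((Matrix.scalar (Fin 2)) (u : F)) (g : Matrix (Fin 2) (Fin 2) F) :=
    Matrix.scalar_commute _ (fun r' => Commute.all _ r') _
  have hval : (n : Matrix (Fin 2) (Fin 2) F) = (Matrix.scalar (Fin 2)) (u : F) := by
    rw [← hu]; rfl
  calc ((Units.map ((Matrix.scalar (Fin 2)).toMonoidHom : F →* Matrix (Fin 2) (Fin 2) F)) u :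
        GL (Fin 2) F).val
      = (Matrix.scalar (Fin 2)) (u : F) := rfl
    _ = (g : Matrix (Fin 2) (Fin 2) F) * (Matrix.scalar (Fin 2)) (u : F)
        * ((g⁻¹ : GL (Fin 2) F) : Matrix (Fin 2) (Fin 2) F) := by
        rw [← hcomm.eq, mul_assoc, ← Units.val_mul, mul_inv_cancel]
        simp
    _ = ((g * n * g⁻¹ : GL (Fin 2) F) : Matrix (Fin 2) (Fin 2) F) := by
        simp [Units.val_mul, hval]

/-- `PGL₂(F)`, the projective general linear group. -/
def PGL2 (F : Type) [Field F] : Type := GL (Fin 2) F ⧸ scalarSub F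

instance : Group (PGL2 F) := inferInstanceAs (Group (GL (Fin 2) F ⧸ scalarSub F))

/-- The natural projection `GL₂(F) → PGL₂(F)`, `A ↦ [A]`. -/
def toPGL (F : Type) [Field F] : GL (Fin 2) F →* PGL2 F := QuotientGroup.mk' (scalarSub F)

/-- The polynomial `F_{A,r} = b x^{q^r+1} - a x^{q^r} + d x - c`. -/
def FAr [Fintype F] (A : Matrix (Fin 2) (Fin 2) F) (r : ℕ) : F[X] :=
  C (A 0 1) * X ^ (Fintype.card F ^ r + 1) - C (A 0 0) * X ^ (Fintype.card F ^ r)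
    + C (A 1 1) * X - C (A 1 0)


/-- The σ-product of `A = [[a,b],[c,d]]` and `A₀ = [[a₀,b₀],[c₀,d₀]]`. -/
def sigmaProd (A A0 : Matrix (Fin 2) (Fin 2) F) : Matrix (Fin 2) (Fin 2) F :=
  !![-(A 0 1 * (A0 0 0 * A0 1 0) - A 0 0 * (A0 0 0 * A0 1 1) + A 1 1 * (A0 1 0 * A0 0 1)
        - A 1 0 * (A0 0 1 * A0 1 1)),
     A 0 1 * A0 0 0 ^ 2 - A 0 0 * (A0 0 0 * A0 0 1) + A 1 1 * (A0 0 0 * A0 0 1)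
        - A 1 0 * A0 0 1 ^ 2;
     -(A 0 1 * A0 1 0 ^ 2 - A 0 0 * (A0 1 0 * A0 1 1) + A 1 1 * (A0 1 1 * A0 1 0)
        - A 1 0 * A0 1 1 ^ 2),
     A 0 1 * (A0 0 0 * A0 1 0) - A 0 0 * (A0 1 0 * A0 0 1) + A 1 1 * (A0 1 1 * A0 0 0)
        - A 1 0 * (A0 0 1 * A0 1 1)]

end PGLAct

namespace InvAux

variable {F : Type} [Field F] [Fintype F]

/-- For `s : ℕ`, the map `x ↦ x ^ q ^ s` is a ring hom on any field extension of `F`. -/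
lemma exists_frob (F : Type) [Field F] [Fintype F] (K : Type) [Field K] [Algebra F K] (s : ℕ) :
    ∃ g : K →+* K, ∀ x : K, g x = x ^ (Fintype.card F) ^ s := by
  have hp : (ringChar F).Prime := CharP.char_is_prime F (ringChar F)
  obtain ⟨e, -, he⟩ := FiniteField.card F (ringChar F)
  haveI : CharP K (ringChar F) := charP_of_injective_algebraMap (algebraMap F K).injective _
  haveI : ExpChar K (ringChar F) := .prime hp
  refine ⟨iterateFrobenius K (ringChar F) (e * s), fun x => ?_⟩
  rw [iterateFrobenius_def, he, ← pow_mul]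

lemma algebraMap_pow_q (K : Type) [Field K] [Algebra F K] (s : ℕ) (c : F) :
    (algebraMap F K c) ^ (Fintype.card F) ^ s = algebraMap F K c := by
  rw [← map_pow, FiniteField.pow_card_pow]

variable (f : F[X]) [Fact (Irreducible f)]

local notation "K" => AdjoinRoot f
local notation "α" => AdjoinRoot.root f
local notation "φ" => algebraMap F (AdjoinRoot f)
local notation "q" => Fintype.card F
local notation "n" => f.natDegree

lemma aeval_root_self : aeval α f = 0 := by
  rw [AdjoinRoot.aeval_eq, AdjoinRoot.mk_self]

lemma dvd_iff (hf : f.Monic) (g : F[X]) :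
    f ∣ g ↔ aeval α g = 0 := by
  constructor
  · rintro ⟨h, rfl⟩
    rw [map_mul, aeval_root_self, zero_mul]
  · intro h
    have hmin : minpoly F α = f := by
      rw [AdjoinRoot.minpoly_root hf.ne_zero, hf.leadingCoeff, inv_one, map_one, mul_one]
    exact hmin ▸ minpoly.dvd F _ h

lemma aeval_pow_q (g : K →+* K) (s : ℕ) (hg : ∀ x : K, g x = x ^ q ^ s)
    (β : K) (p : F[X]) : aeval (β ^ q ^ s) p = g (aeval β p) := by
  rw [aeval_def, aeval_def, hom_eval₂, ← hg]
  congr 1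
  ext c
  simp only [RingHom.comp_apply, hg, algebraMap_pow_q]

lemma root_pow_q (s : ℕ) (β : K) (hβ : aeval β f = 0) : aeval (β ^ q ^ s) f = 0 := by
  obtain ⟨g, hg⟩ := exists_frob F K s
  rw [aeval_pow_q f g s hg, hβ, map_zero]

lemma card_K (hf : f.Monic) : ∃ _ : Fintype K, Fintype.card K = q ^ n := by
  haveI : Module.Finite F K := Module.Finite.of_basis (AdjoinRoot.powerBasis hf.ne_zero).basis
  haveI : Finite K := Module.finite_of_finite (R := F)
  haveI : Fintype K := Fintype.ofFinite K
  refine ⟨inferInstance, ?_⟩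
  have hc : Fintype.card K = q ^ Module.finrank F K := Module.card_eq_pow_finrank
  rw [hc, PowerBasis.finrank (AdjoinRoot.powerBasis hf.ne_zero), AdjoinRoot.powerBasis_dim]

lemma alpha_pow_card (hf : f.Monic) : α ^ q ^ n = α := by
  obtain ⟨hK, hcard⟩ := card_K f hf
  rw [← hcard, FiniteField.pow_card]

lemma alpha_pow_nmul (hf : f.Monic) (k : ℕ) : α ^ q ^ (n * k) = α := by
  induction k with
  | zero => simp
  | succ k ih =>
      have : (q : ℕ) ^ (n * (k+1)) = q ^ (n * k) * q ^ n := by rw [← pow_add, Nat.mul_succ]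
      rw [this, pow_mul, ih, alpha_pow_card f hf]

lemma alpha_pow_mod (hf : f.Monic) (s : ℕ) : α ^ q ^ s = α ^ q ^ (s % n) := by
  conv_lhs => rw [← Nat.div_add_mod s n]
  rw [pow_add, pow_mul, alpha_pow_nmul f hf]

lemma one_lt_q : 1 < q := Fintype.one_lt_card

lemma alpha_pow_fix (hf : f.Monic) (s : ℕ) (hs : s < n) (h : α ^ q ^ s = α) : s = 0 := by
  by_contra hs0
  have hs1 : 1 ≤ s := Nat.one_le_iff_ne_zero.mpr hs0
  obtain ⟨g, hg⟩ := exists_frob F K s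
  have hfix : ∀ x : K, x ^ q ^ s = x := by
    intro x
    obtain ⟨p, rfl⟩ := AdjoinRoot.mk_surjective x
    rw [← AdjoinRoot.aeval_eq, ← hg, ← aeval_pow_q f g s hg, h]
  -- the polynomial X^(q^s) - X over K has all of K as roots
  set P : K[X] := X ^ (q ^ s) - X with hP
  have hq1 : 1 < q ^ s := by
    calc 1 < q := one_lt_q
    _ ≤ q ^ s := Nat.le_self_pow hs0 q
  have hPne : P ≠ 0 := by
    intro h0
    have : P.coeff (q ^ s) = 1 := by
      simp [hP, coeff_X_pow, coeff_X]
      omega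
    rw [h0] at this
    simp at this
  obtain ⟨hK, hcard⟩ := card_K f hf
  have hsub : (Finset.univ : Finset K) ⊆ P.roots.toFinset := by
    intro x _
    rw [Multiset.mem_toFinset, mem_roots hPne]
    simp only [hP, IsRoot, eval_sub, eval_pow, eval_X]
    rw [hfix x, sub_self]
  have hle : Fintype.card K ≤ q ^ s := by
    calc Fintype.card K = (Finset.univ : Finset K).card := rfl
      _ ≤ P.roots.toFinset.card := Finset.card_le_card hsub
      _ ≤ Multiset.card P.roots := Multiset.toFinset_card_le _
      _ ≤ P.natDegree := P.card_roots'
      _ ≤ q ^ s := by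
          refine (natDegree_sub_le _ _).trans ?_
          simp
          omega
  rw [hcard] at hle
  have := (Nat.pow_le_pow_iff_right one_lt_q).mp hle
  omega

lemma frob_pow_inj (hf : f.Monic) {i j : ℕ} (hi : i < n) (hj : j < n)
    (h : α ^ q ^ i = α ^ q ^ j) : i = j := by
  wlog hij : i ≤ j generalizing i j
  · exact (this hj hi h.symm (by omega)).symm
  obtain ⟨g, hg⟩ := exists_frob F K i
  have hginj : Function.Injective g := g.injective
  have hd : (α ^ q ^ (j - i)) ^ q ^ i = α ^ q ^ i := by
    rw [← pow_mul, ← pow_add]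
    rw [Nat.sub_add_cancel hij]
    exact h.symm
  rw [← hg, ← hg] at hd
  have := hginj hd
  have hz := alpha_pow_fix f hf (j - i) (by omega) this
  omega

lemma root_eq_pow (hf : f.Monic) (β : K) (hβ : aeval β f = 0) :
    ∃ i, i < n ∧ β = α ^ q ^ i := by
  have hn : 0 < n := (Fact.out : Irreducible f).natDegree_pos
  set fK : K[X] := f.map φ with hfK
  have hfKne : fK ≠ 0 := (Polynomial.map_ne_zero_iff (algebraMap F K).injective).mpr hf.ne_zero
  have hroot : ∀ γ : K, aeval γ f = 0 → γ ∈ fK.roots.toFinset := by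
    intro γ hγ
    rw [Multiset.mem_toFinset, mem_roots hfKne]
    rw [IsRoot, hfK, eval_map, ← aeval_def, hγ]
  set S : Finset K := (Finset.range n).image (fun i => α ^ q ^ i) with hS
  have hcardS : S.card = n := by
    rw [hS, Finset.card_image_of_injOn, Finset.card_range]
    intro i hi j hj hij
    exact frob_pow_inj f hf (Finset.mem_range.mp hi) (Finset.mem_range.mp hj) hij
  have hsub : S ⊆ fK.roots.toFinset := by
    intro x hx
    rw [hS, Finset.mem_image] at hx
    obtain ⟨i, hi, rfl⟩ := hx
    exact hroot _ (root_pow_q f i α (aeval_root_self f))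
  have hle : fK.roots.toFinset.card ≤ n := by
    calc fK.roots.toFinset.card ≤ Multiset.card fK.roots := Multiset.toFinset_card_le _
      _ ≤ fK.natDegree := fK.card_roots'
      _ = n := by rw [hfK]; exact natDegree_map_eq_of_injective (algebraMap F K).injective f
  have hSeq : S = fK.roots.toFinset :=
    Finset.eq_of_subset_of_card_le hsub (by omega)
  have hmem : β ∈ S := by rw [hSeq]; exact hroot β hβ
  rw [hS, Finset.mem_image] at hmem
  obtain ⟨i, hi, hβ'⟩ := hmem
  exact ⟨i, Finset.mem_range.mp hi, hβ'.symm⟩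

lemma minpoly_eq (hf : f.Monic) : minpoly F α = f := by
  rw [AdjoinRoot.minpoly_root hf.ne_zero, hf.leadingCoeff, inv_one, map_one, mul_one]

lemma not_in_base (hf : f.Monic) (hn : 2 ≤ n) (x : F) : α ≠ φ x := by
  intro h
  have h0 : aeval α (X - C x : F[X]) = 0 := by simp [h]
  have hdvd := (minpoly_eq f hf) ▸ minpoly.dvd F α h0
  have := Polynomial.natDegree_le_of_dvd hdvd (Polynomial.X_sub_C_ne_zero x)
  rw [natDegree_X_sub_C] at this
  omega


open PGLAct

/-- The key relation: `[A]` maps `α` to `α ^ q ^ s` (in homogeneous form). -/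
def Rel (B : Matrix (Fin 2) (Fin 2) F) (s : ℕ) : Prop :=
  φ (B 0 0) * α + φ (B 1 0) = α ^ q ^ s * (φ (B 0 1) * α + φ (B 1 1))

lemma rel_mod (hf : f.Monic) (B : Matrix (Fin 2) (Fin 2) F) (s : ℕ) :
    Rel f B s ↔ Rel f B (s % n) := by
  unfold Rel
  rw [alpha_pow_mod f hf s]

lemma rel_mul (B B' : Matrix (Fin 2) (Fin 2) F) (s s' : ℕ)
    (h : Rel f B s) (h' : Rel f B' s') : Rel f (B * B') (s + s') := by
  obtain ⟨g, hg⟩ := exists_frob F K s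
  have h'' := congrArg g h'
  simp only [map_add, map_mul, map_pow] at h''
  simp only [hg, algebraMap_pow_q] at h''
  rw [← pow_mul, ← pow_add] at h''
  unfold Rel at h ⊢
  simp only [Matrix.mul_apply, Fin.sum_univ_two, map_add, map_mul]
  linear_combination (φ (B' 0 0) - α ^ q ^ (s + s') * φ (B' 0 1)) * h
    + (φ (B 0 1) * α + φ (B 1 1)) * h''

lemma rel_one : Rel f 1 0 := by
  unfold Rel
  simp [Matrix.one_apply]

lemma rel_pow (B : GL (Fin 2) F) (s : ℕ) (h : Rel f B.val s) (k : ℕ) :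
    Rel f ((B ^ k).val) (s * k) := by
  induction k with
  | zero => simpa using rel_one f
  | succ k ih =>
      have h1 : (B ^ (k+1)).val = (B ^ k).val * B.val := by
        rw [pow_succ, Units.val_mul]
      rw [h1, Nat.mul_succ]
      exact rel_mul f _ _ _ _ ih h

lemma det_ne_zero (B : GL (Fin 2) F) : B.val.det ≠ 0 :=
  ((Matrix.isUnit_iff_isUnit_det B.val).mp B.isUnit).ne_zero

lemma denom_ne (hf : f.Monic) (hn : 2 ≤ n) (B : GL (Fin 2) F) :
    φ (B.val 0 1) * α + φ (B.val 1 1) ≠ 0 := by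
  intro h0
  by_cases hb : B.val 0 1 = 0
  · have hd : B.val 1 1 = 0 := by
      have : φ (B.val 1 1) = 0 := by
        rw [hb] at h0; simpa using h0
      exact (map_eq_zero_iff φ (algebraMap F K).injective).mp this
    have hdet := det_ne_zero B
    rw [Matrix.det_fin_two, hb, hd] at hdet
    simp at hdet
  · have hφb : φ (B.val 0 1) ≠ 0 := fun h =>
      hb ((map_eq_zero_iff φ (algebraMap F K).injective).mp h)
    apply not_in_base f hf hn (-(B.val 1 1) / (B.val 0 1))
    rw [map_div₀, map_neg, eq_div_iff hφb]
    linear_combination h0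

lemma rel_unique (hf : f.Monic) (hn : 2 ≤ n) (B : GL (Fin 2) F) (s s' : ℕ)
    (h : Rel f B.val s) (h' : Rel f B.val s') : s % n = s' % n := by
  have hnpos : 0 < n := by omega
  have heq0 : α ^ q ^ s * (φ (B.val 0 1) * α + φ (B.val 1 1))
      = α ^ q ^ s' * (φ (B.val 0 1) * α + φ (B.val 1 1)) := by
    rw [← h, ← h']
  have heq : α ^ q ^ s = α ^ q ^ s' :=
    mul_right_cancel₀ (denom_ne f hf hn B) heq0
  rw [alpha_pow_mod f hf s, alpha_pow_mod f hf s'] at heq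
  exact frob_pow_inj f hf (Nat.mod_lt _ hnpos) (Nat.mod_lt _ hnpos) heq

lemma rel_of_pgl_one (B : GL (Fin 2) F) (h : toPGL F B = 1) : Rel f B.val 0 := by
  have hmem : B ∈ scalarSub F := (QuotientGroup.eq_one_iff B).mp h
  obtain ⟨u, hu⟩ := hmem
  have hval : B.val = Matrix.scalar (Fin 2) (u : F) := by
    rw [← hu]; rfl
  unfold Rel
  rw [hval]
  simp [Matrix.scalar_apply, Matrix.diagonal_apply_eq, Matrix.diagonal_apply_ne]
  ring

lemma pgl_one_of_rel (hf : f.Monic) (hn3 : 3 ≤ n) (B : GL (Fin 2) F)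
    (h : Rel f B.val 0) : toPGL F B = 1 := by
  set a := B.val 0 0 with ha'
  set b := B.val 0 1 with hb'
  set c := B.val 1 0 with hc'
  set d := B.val 1 1 with hd'
  have h1 : φ a * α + φ c = α * (φ b * α + φ d) := by
    have := h
    unfold Rel at this
    simpa using this
  set gq : F[X] := C b * X^2 + C (d - a) * X + C (-c) with hgq'
  have hev : aeval α gq = 0 := by
    simp only [hgq', map_add, map_mul, map_pow, aeval_C, aeval_X, map_sub, map_neg]
    linear_combination -h1
  have hgq : gq = 0 := by
    by_contra hne
    have hdvd : f ∣ gq := (minpoly_eq f hf) ▸ minpoly.dvd F α hev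
    have hle := natDegree_le_of_dvd hdvd hne
    have h2 : gq.natDegree ≤ 2 := natDegree_quadratic_le
    omega
  have hb : b = 0 := by
    have := congrArg (fun p => coeff p 2) hgq
    simpa [hgq', coeff_C] using this
  have hc : c = 0 := by
    have := congrArg (fun p => coeff p 0) hgq
    simpa [hgq', coeff_C] using this
  have had : d = a := by
    have := congrArg (fun p => coeff p 1) hgq
    simp [hgq', coeff_C] at this
    exact sub_eq_zero.mp this

  have ha : a ≠ 0 := by
    intro h0
    have hdet := det_ne_zero B
    rw [Matrix.det_fin_two] at hdet
    rw [← ha', ← hb', ← hc', ← hd'] at hdet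
    rw [h0, hb, hc] at hdet
    simp at hdet
  apply (QuotientGroup.eq_one_iff B).mpr
  refine ⟨Units.mk0 a ha, ?_⟩
  apply Units.ext
  show Matrix.scalar (Fin 2) a = B.val
  ext i j
  fin_cases i <;> fin_cases j <;>
    simp [Matrix.scalar_apply, Matrix.diagonal_apply_eq, Matrix.diagonal_apply_ne,
      ← ha', ← hb', ← hc', ← hd', hb, hc, had]

lemma rel_scalar_cancel (u : F) (hu : u ≠ 0) (M : Matrix (Fin 2) (Fin 2) F) (s : ℕ)
    (h : Rel f (M * Matrix.scalar (Fin 2) u) s) : Rel f M s := by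
  have hφu : φ u ≠ 0 := fun h0 => hu ((map_eq_zero_iff φ (algebraMap F K).injective).mp h0)
  unfold Rel at h ⊢
  simp only [Matrix.scalar_apply, Matrix.mul_diagonal, map_mul] at h
  apply mul_right_cancel₀ hφu
  linear_combination h

lemma rel_FAr_iff (hf : f.Monic) (B : Matrix (Fin 2) (Fin 2) F) (s t : ℕ) (hst : t + s = n) :
    Rel f B s ↔ aeval α (FAr B t) = 0 := by
  have halpha : α ^ q ^ (t + s) = α := by rw [hst]; exact alpha_pow_card f hf
  have hFAr : aeval α (FAr B t) = φ (B 0 1) * α ^ (q ^ t + 1) - φ (B 0 0) * α ^ q ^ t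
      + φ (B 1 1) * α - φ (B 1 0) := by
    simp [FAr, map_sub, map_add, map_mul, map_pow]
  constructor
  · intro h
    obtain ⟨g, hg⟩ := exists_frob F K t
    have h' := congrArg g h
    simp only [map_add, map_mul, map_pow] at h'
    simp only [hg, algebraMap_pow_q] at h'
    rw [← pow_mul, ← pow_add, halpha] at h'
    rw [hFAr]
    have hsplit : α ^ (q ^ t + 1) = α ^ q ^ t * α := by rw [pow_add, pow_one]
    rw [hsplit]
    linear_combination -h'
  · intro h
    rw [hFAr] at h
    have h' : φ (B 0 0) * α ^ q ^ t + φ (B 1 0)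
        = α * (φ (B 0 1) * α ^ q ^ t + φ (B 1 1)) := by
      have hsplit : α ^ (q ^ t + 1) = α ^ q ^ t * α := by rw [pow_add, pow_one]
      rw [hsplit] at h
      linear_combination -h
    obtain ⟨g, hg⟩ := exists_frob F K s
    have h'' := congrArg g h'
    simp only [map_add, map_mul, map_pow] at h''
    simp only [hg, algebraMap_pow_q] at h''
    rw [← pow_mul, ← pow_add, add_comm s t, halpha] at h''
    exact h''

lemma no_root_F (hf : f.Monic) (hn : 2 ≤ n) (x : F) : eval x f ≠ 0 := by
  intro h
  obtain ⟨g, hg⟩ := dvd_iff_isRoot.mpr h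
  rcases (Fact.out : Irreducible f).isUnit_or_isUnit hg with h1 | h2
  · exact Polynomial.not_isUnit_X_sub_C x h1
  · have hg0 : g ≠ 0 := fun h0 => by
      rw [h0, mul_zero] at hg; exact hf.ne_zero hg
    have hdg : g.natDegree = 0 := natDegree_eq_zero_of_isUnit h2
    have := congrArg natDegree hg
    rw [natDegree_mul (X_sub_C_ne_zero x) hg0, natDegree_X_sub_C, hdg] at this
    omega

lemma lin_natDegree_le (x y : F) : (C x * X + C y : F[X]).natDegree ≤ 1 :=
  natDegree_linear_le

lemma lin_coeff_one (x y : F) : (C x * X + C y : F[X]).coeff 1 = x := by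
  simp [coeff_add, coeff_C]

lemma mcirc_coeff_eq (M : Matrix (Fin 2) (Fin 2) F) :
    (mcirc M f).coeff n = ∑ i ∈ Finset.range (n + 1),
      f.coeff i * (M 0 0) ^ i * (M 0 1) ^ (n - i) := by
  rw [mcirc, finset_sum_coeff]
  refine Finset.sum_congr rfl fun i hi => ?_
  have hi' : i ≤ n := Nat.lt_succ_iff.mp (Finset.mem_range.mp hi)
  have h1 : (C (f.coeff i) * (C (M 0 0) * X + C (M 1 0)) ^ i).natDegree ≤ i := by
    refine natDegree_mul_le.trans ?_
    simp only [natDegree_C, zero_add]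
    calc ((C (M 0 0) * X + C (M 1 0) : F[X]) ^ i).natDegree ≤ i * _ := natDegree_pow_le
      _ ≤ i * 1 := Nat.mul_le_mul_left _ (lin_natDegree_le _ _)
      _ = i := Nat.mul_one _
  have h2 : ((C (M 0 1) * X + C (M 1 1) : F[X]) ^ (n - i)).natDegree ≤ n - i := by
    calc ((C (M 0 1) * X + C (M 1 1) : F[X]) ^ (n-i)).natDegree ≤ (n-i) * _ := natDegree_pow_le
      _ ≤ (n-i) * 1 := Nat.mul_le_mul_left _ (lin_natDegree_le _ _)
      _ = n - i := Nat.mul_one _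
  have hrw := coeff_mul_add_eq_of_natDegree_le h1 h2
  rw [show i + (f.natDegree - i) = f.natDegree by omega] at hrw
  rw [hrw, coeff_C_mul]
  have hp1 : ((C (M 0 0) * X + C (M 1 0) : F[X]) ^ i).coeff i = (M 0 0) ^ i := by
    have := coeff_pow_of_natDegree_le (p := (C (M 0 0) * X + C (M 1 0) : F[X]))
      (m := i) (lin_natDegree_le _ _)
    rw [mul_one] at this
    rw [this, lin_coeff_one]
  have hp2 : ((C (M 0 1) * X + C (M 1 1) : F[X]) ^ (n - i)).coeff (n - i) = (M 0 1) ^ (n - i) := by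
    have := coeff_pow_of_natDegree_le (p := (C (M 0 1) * X + C (M 1 1) : F[X]))
      (m := n - i) (lin_natDegree_le _ _)
    rw [mul_one] at this
    rw [this, lin_coeff_one]
  rw [hp1, hp2]

lemma mcirc_coeff_top_ne (hf : f.Monic) (hn : 2 ≤ n) (A : GL (Fin 2) F) :
    (mcirc A.val f).coeff n ≠ 0 := by
  rw [mcirc_coeff_eq]
  by_cases hb : A.val 0 1 = 0
  · have ha : A.val 0 0 ≠ 0 := by
      intro h0
      have hdet := det_ne_zero A
      rw [Matrix.det_fin_two, hb, h0] at hdet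
      simp at hdet
    have hsum : ∑ i ∈ Finset.range (n + 1),
        f.coeff i * (A.val 0 0) ^ i * (A.val 0 1) ^ (n - i) = (A.val 0 0) ^ n := by
      rw [Finset.sum_eq_single n]
      · rw [hf.coeff_natDegree, Nat.sub_self, pow_zero, one_mul, mul_one]
      · intro i hi hne
        have hi' : i ≤ n := Nat.lt_succ_iff.mp (Finset.mem_range.mp hi)
        rw [hb, zero_pow (by omega : n - i ≠ 0), mul_zero]
      · intro h; exact absurd (Finset.self_mem_range_succ n) h
    rw [hsum]
    exact pow_ne_zero n ha
  · have hsum : ∑ i ∈ Finset.range (n + 1),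
        f.coeff i * (A.val 0 0) ^ i * (A.val 0 1) ^ (n - i)
        = (A.val 0 1) ^ n * eval (A.val 0 0 / A.val 0 1) f := by
      rw [eval_eq_sum_range, Finset.mul_sum]
      refine Finset.sum_congr rfl fun i hi => ?_
      have hi' : i ≤ n := Nat.lt_succ_iff.mp (Finset.mem_range.mp hi)
      have hbn : (A.val 0 1) ^ n = (A.val 0 1) ^ i * (A.val 0 1) ^ (n - i) := by
        rw [← pow_add]; congr 1; omega
      rw [hbn, div_pow]
      field_simp
    rw [hsum]
    exact mul_ne_zero (pow_ne_zero n hb) (no_root_F f hf hn _)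

lemma mcirc_natDegree_le (M : Matrix (Fin 2) (Fin 2) F) :
    (mcirc M f).natDegree ≤ n := by
  rw [mcirc]
  refine natDegree_sum_le_of_forall_le _ _ fun i hi => ?_
  have hi' : i ≤ n := Nat.lt_succ_iff.mp (Finset.mem_range.mp hi)
  refine natDegree_mul_le.trans ?_
  have h1 : (C (f.coeff i) * (C (M 0 0) * X + C (M 1 0)) ^ i).natDegree ≤ i := by
    refine natDegree_mul_le.trans ?_
    simp only [natDegree_C, zero_add]
    calc ((C (M 0 0) * X + C (M 1 0) : F[X]) ^ i).natDegree ≤ i * _ := natDegree_pow_le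
      _ ≤ i * 1 := Nat.mul_le_mul_left _ (lin_natDegree_le _ _)
      _ = i := Nat.mul_one _
  have h2 : ((C (M 0 1) * X + C (M 1 1) : F[X]) ^ (n - i)).natDegree ≤ n - i := by
    calc ((C (M 0 1) * X + C (M 1 1) : F[X]) ^ (n-i)).natDegree ≤ (n-i) * _ := natDegree_pow_le
      _ ≤ (n-i) * 1 := Nat.mul_le_mul_left _ (lin_natDegree_le _ _)
      _ = n - i := Nat.mul_one _
  omega

lemma pcirc_eq_iff_dvd (hf : f.Monic) (hn : 2 ≤ n) (A : GL (Fin 2) F) :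
    pcirc A.val f = f ↔ f ∣ mcirc A.val f := by
  have hc := mcirc_coeff_top_ne f hf hn A
  have hm0 : mcirc A.val f ≠ 0 := fun h => hc (by rw [h, coeff_zero])
  have hdeg : (mcirc A.val f).natDegree = n :=
    le_antisymm (mcirc_natDegree_le f _) (le_natDegree_of_ne_zero hc)
  have hlc : (mcirc A.val f).leadingCoeff ≠ 0 := leadingCoeff_ne_zero.mpr hm0
  constructor
  · intro h
    refine ⟨C (mcirc A.val f).leadingCoeff, ?_⟩
    rw [pcirc] at h
    calc mcirc A.val f
        = C (mcirc A.val f).leadingCoeff * (C (mcirc A.val f).leadingCoeff⁻¹ * mcirc A.val f) := by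
          rw [← mul_assoc, ← C_mul, mul_inv_cancel₀ hlc, C_1, one_mul]
      _ = C (mcirc A.val f).leadingCoeff * f := by rw [h]
      _ = f * C (mcirc A.val f).leadingCoeff := mul_comm _ _
  · rintro ⟨g, hg⟩
    have hg0 : g ≠ 0 := by
      rintro rfl
      rw [mul_zero] at hg
      exact hm0 hg
    have hdg : g.natDegree = 0 := by
      rw [hg, natDegree_mul hf.ne_zero hg0] at hdeg
      omega
    have hgC : g = C (g.coeff 0) := eq_C_of_natDegree_eq_zero hdg
    have hc0 : g.coeff 0 ≠ 0 := by
      intro h0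
      rw [hgC, h0, C_0, mul_zero] at hg
      exact hm0 hg
    rw [pcirc, hg, hgC, leadingCoeff_mul, hf.leadingCoeff, one_mul, leadingCoeff_C]
    rw [mul_comm f (C (g.coeff 0)), ← mul_assoc, ← C_mul, inv_mul_cancel₀ hc0, C_1, one_mul]

lemma pcirc_iff_rel (hf : f.Monic) (hn3 : 3 ≤ n) (A : GL (Fin 2) F) :
    pcirc A.val f = f ↔ ∃ r, r < n ∧ Rel f A.val r := by
  have hn2 : 2 ≤ n := by omega
  rw [pcirc_eq_iff_dvd f hf hn2 A, dvd_iff f hf]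
  have hv : φ (A.val 0 1) * α + φ (A.val 1 1) ≠ 0 := denom_ne f hf hn2 A
  have hsum : aeval α (mcirc A.val f) = ∑ i ∈ Finset.range (n + 1),
      φ (f.coeff i) * (φ (A.val 0 0) * α + φ (A.val 1 0)) ^ i
        * (φ (A.val 0 1) * α + φ (A.val 1 1)) ^ (n - i) := by
    simp only [mcirc, map_sum, map_mul, map_pow, map_add, aeval_C, aeval_X]
  rw [hsum]
  set u : K := φ (A.val 0 0) * α + φ (A.val 1 0) with hu'
  set v : K := φ (A.val 0 1) * α + φ (A.val 1 1) with hv'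
  constructor
  · intro h0
    set β : K := u * v⁻¹ with hβ'
    have hβ0 : aeval β f * v ^ n = 0 := by
      rw [aeval_eq_sum_range, Finset.sum_mul]
      rw [← h0]
      refine Finset.sum_congr rfl fun i hi => ?_
      have hi' : i ≤ n := Nat.lt_succ_iff.mp (Finset.mem_range.mp hi)
      have hvi : (v : K) ^ n = v ^ i * v ^ (n - i) := by
        rw [← pow_add]; congr 1; omega
      rw [Algebra.smul_def, hβ', mul_pow, inv_pow, hvi]
      rw [show φ (f.coeff i) * (u ^ i * (v ^ i)⁻¹) * (v ^ i * v ^ (n - i))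
          = φ (f.coeff i) * u ^ i * ((v ^ i)⁻¹ * v ^ i) * v ^ (n - i) by ring]
      rw [inv_mul_cancel₀ (pow_ne_zero i hv), mul_one]
    have hβroot : aeval β f = 0 := by
      rcases mul_eq_zero.mp hβ0 with h | h
      · exact h
      · exact absurd h (pow_ne_zero n hv)
    obtain ⟨i, hi, hβeq⟩ := root_eq_pow f hf β hβroot
    refine ⟨i, hi, ?_⟩
    unfold Rel
    rw [← hu', ← hv', ← hβeq, hβ']
    rw [mul_comm (u * v⁻¹) v, mul_comm u v⁻¹, ← mul_assoc, mul_inv_cancel₀ hv, one_mul]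
  · rintro ⟨r, hr, hrel⟩
    unfold Rel at hrel
    rw [← hu', ← hv'] at hrel
    calc ∑ i ∈ Finset.range (n + 1), φ (f.coeff i) * u ^ i * v ^ (n - i)
        = (∑ i ∈ Finset.range (n + 1), φ (f.coeff i) * (α ^ q ^ r) ^ i) * v ^ n := by
          rw [Finset.sum_mul]
          refine Finset.sum_congr rfl fun i hi => ?_
          have hi' : i ≤ n := Nat.lt_succ_iff.mp (Finset.mem_range.mp hi)
          have hvi : (v : K) ^ n = v ^ i * v ^ (n - i) := by
            rw [← pow_add]; congr 1; omega
          rw [hrel, hvi, mul_pow]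
          ring
      _ = aeval (α ^ q ^ r) f * v ^ n := by
          rw [aeval_eq_sum_range]
          congr 1
          refine Finset.sum_congr rfl fun i _ => ?_
          rw [Algebra.smul_def]
      _ = 0 := by rw [root_pow_q f r α (aeval_root_self f), zero_mul]

end InvAux

/-- A monic irreducible `f` of degree `Dm > 2` satisfies `[A]∘f = f` iff `f`
divides `F_{A^j,m}` for some `1 ≤ j ≤ D-1` with `gcd(j,D) = 1`. -/
theorem invariant_iff_divides_FAr {F : Type} [Field F] [Fintype F]
    (A : GL (Fin 2) F) (hA : PGLAct.toPGL F A ≠ 1)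
    (D : ℕ) (hD : D = orderOf (PGLAct.toPGL F A))
    (m : ℕ) (hm : 1 ≤ m) (hDm : 2 < D * m)
    (f : F[X]) (hf : f.Monic) (hirr : Irreducible f) (hdeg : f.natDegree = D * m) :
    PGLAct.pcirc A.val f = f ↔
      ∃ j : ℕ, 1 ≤ j ∧ j ≤ D - 1 ∧ Nat.gcd j D = 1 ∧ f ∣ PGLAct.FAr ((A ^ j).val) m := by
  haveI : Fact (Irreducible f) := ⟨hirr⟩
  have hn3 : 3 ≤ f.natDegree := by omega
  have hn2 : 2 ≤ f.natDegree := by omega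
  have hn : f.natDegree = D * m := hdeg
  haveI : Finite (PGLAct.PGL2 F) := Quotient.finite _
  have hDpos : 0 < D := hD ▸ orderOf_pos _
  have hD1 : D ≠ 1 := by
    intro h1
    rw [h1] at hD
    exact hA (orderOf_eq_one_iff.mp hD.symm)
  have hD2 : 2 ≤ D := by omega
  have hsumDm : m + (D - 1) * m = f.natDegree := by
    have h1 : D - 1 + 1 = D := by omega
    calc m + (D - 1) * m = (D - 1 + 1) * m := by ring
      _ = D * m := by rw [h1]
      _ = f.natDegree := hn.symm
  have hAD : PGLAct.toPGL F (A ^ D) = 1 := by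
    rw [map_pow, hD, pow_orderOf_eq_one]
  rw [InvAux.pcirc_iff_rel f hf hn3 A]
  constructor
  · rintro ⟨r, hr, hrel⟩
    have hrelD : InvAux.Rel f ((A ^ D).val) (r * D) := InvAux.rel_pow f A r hrel D
    have hrel0 : InvAux.Rel f ((A ^ D).val) 0 := InvAux.rel_of_pgl_one f (A ^ D) hAD
    have hmod : (r * D) % f.natDegree = 0 % f.natDegree :=
      InvAux.rel_unique f hf hn2 (A ^ D) (r * D) 0 hrelD hrel0
    have hdvdn : f.natDegree ∣ r * D := by
      apply Nat.dvd_of_mod_eq_zero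
      simpa using hmod
    have hmr : m ∣ r := by
      have h2 : D * m ∣ D * r := by
        rw [← hn]
        rwa [mul_comm r D] at hdvdn
      exact (Nat.mul_dvd_mul_iff_left hDpos).mp h2
    obtain ⟨t, ht⟩ := hmr
    have htD : t < D := by
      have h3 : m * t < m * D := by
        rw [← ht, mul_comm m D, ← hn]
        exact hr
      exact Nat.lt_of_mul_lt_mul_left h3
    have ht0 : t ≠ 0 := by
      rintro rfl
      rw [mul_zero] at ht
      exact hA (InvAux.pgl_one_of_rel f hf hn3 A (ht ▸ hrel))
    have htco : Nat.gcd t D = 1 := by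
      by_contra hg
      set G := Nat.gcd t D with hG
      have hGD : G ∣ D := Nat.gcd_dvd_right t D
      have hGt : G ∣ t := Nat.gcd_dvd_left t D
      have hGpos : 0 < G := Nat.gcd_pos_of_pos_right t hDpos
      have hG2 : 2 ≤ G := by omega
      set D' := D / G with hD'
      have hD'mul : G * D' = D := Nat.mul_div_cancel' hGD
      have hD'lt : D' < D := Nat.div_lt_self hDpos hG2
      have hD'pos : 0 < D' := Nat.div_pos (Nat.le_of_dvd hDpos hGD) hGpos
      obtain ⟨t2, ht2⟩ := hGt
      have hrelD' : InvAux.Rel f ((A ^ D').val) (r * D') := InvAux.rel_pow f A r hrel D'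
      have hzero : (r * D') % f.natDegree = 0 := by
        have h4 : r * D' = f.natDegree * t2 := by
          rw [ht, ht2, hn, ← hD'mul]
          ring
        rw [h4, Nat.mul_mod_right]
      have hrel0' : InvAux.Rel f ((A ^ D').val) 0 := by
        have h5 := (InvAux.rel_mod f hf _ (r * D')).mp hrelD'
        rwa [hzero] at h5
      have hpgl : PGLAct.toPGL F (A ^ D') = 1 :=
        InvAux.pgl_one_of_rel f hf hn3 (A ^ D') hrel0'
      have hdvd : D ∣ D' := by
        rw [hD]
        exact orderOf_dvd_of_pow_eq_one (by rw [← map_pow]; exact hpgl)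
      have := Nat.le_of_dvd hD'pos hdvd
      omega
    haveI : NeZero D := ⟨by omega⟩
    haveI : Fact (1 < D) := ⟨by omega⟩
    set tu : (ZMod D)ˣ := ZMod.unitOfCoprime t htco with htu
    set ju : (ZMod D)ˣ := tu⁻¹ * (-1) with hju
    set j := ((ju : ZMod D)).val with hj
    have hjco : Nat.Coprime j D := ZMod.val_coe_unit_coprime ju
    have hjlt : j < D := ZMod.val_lt _
    have hj0 : j ≠ 0 := by
      intro h0
      have h1 : (ju : ZMod D) = 0 := by rwa [← ZMod.val_eq_zero]
      have h2 : IsUnit (0 : ZMod D) := h1 ▸ ju.isUnit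
      exact not_isUnit_zero h2
    have hcong : t * j ≡ (D - 1) [MOD D] := by
      have hD1' : ((D - 1 : ℕ) : ZMod D) = -1 := by
        rw [Nat.cast_sub (by omega : 1 ≤ D), Nat.cast_one, ZMod.natCast_self, zero_sub]
      have h1 : ((t * j : ℕ) : ZMod D) = ((D - 1 : ℕ) : ZMod D) := by
        rw [Nat.cast_mul, hD1']
        have ht' : ((t : ℕ) : ZMod D) = ((tu : (ZMod D)ˣ) : ZMod D) :=
          (ZMod.coe_unitOfCoprime t htco).symm
        have hj' : ((j : ℕ) : ZMod D) = ((ju : (ZMod D)ˣ) : ZMod D) := by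
          rw [hj]; exact ZMod.natCast_rightInverse _
        rw [ht', hj', hju, Units.val_mul, Units.val_neg, Units.val_one]
        have hmulinv : ((tu : (ZMod D)ˣ) : ZMod D) * (((tu⁻¹ : (ZMod D)ˣ)) : ZMod D) = 1 := by
          rw [← Units.val_mul, mul_inv_cancel, Units.val_one]
        calc ((tu : (ZMod D)ˣ) : ZMod D) * (((tu⁻¹ : (ZMod D)ˣ) : ZMod D) * -1)
            = ((tu : (ZMod D)ˣ) : ZMod D) * (((tu⁻¹ : (ZMod D)ˣ)) : ZMod D) * -1 := by ring
          _ = -1 := by rw [hmulinv]; ring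
      exact (ZMod.natCast_eq_natCast_iff _ _ _).mp h1
    refine ⟨j, by omega, by omega, hjco, ?_⟩
    have hrelj : InvAux.Rel f ((A ^ j).val) (r * j) := InvAux.rel_pow f A r hrel j
    have hmodeq : (r * j) % f.natDegree = ((D - 1) * m) % f.natDegree := by
      rw [hn]
      have h2 : (t * j) * m ≡ (D - 1) * m [MOD D * m] := Nat.ModEq.mul_right' _ hcong
      have h3 : r * j = (t * j) * m := by rw [ht]; ring
      rw [h3]
      exact h2
    have hreljm : InvAux.Rel f ((A ^ j).val) ((D - 1) * m) := by
      rw [InvAux.rel_mod f hf _ ((D - 1) * m), ← hmodeq, ← InvAux.rel_mod f hf _ (r * j)]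
      exact hrelj
    rw [InvAux.dvd_iff f hf, ← InvAux.rel_FAr_iff f hf _ ((D - 1) * m) m hsumDm]
    exact hreljm
  · rintro ⟨j, hj1, hjle, hjco, hdvd⟩
    have hreljm : InvAux.Rel f ((A ^ j).val) ((D - 1) * m) := by
      rw [InvAux.rel_FAr_iff f hf _ ((D - 1) * m) m hsumDm, ← InvAux.dvd_iff f hf]
      exact hdvd
    haveI : NeZero D := ⟨by omega⟩
    haveI : Fact (1 < D) := ⟨by omega⟩
    set ju : (ZMod D)ˣ := ZMod.unitOfCoprime j hjco with hju
    set k := ((ju⁻¹ : (ZMod D)ˣ) : ZMod D).val with hk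
    have hk0 : k ≠ 0 := by
      intro h0
      have h1 : ((ju⁻¹ : (ZMod D)ˣ) : ZMod D) = 0 := by rwa [← ZMod.val_eq_zero]
      have h2 : IsUnit (0 : ZMod D) := h1 ▸ (ju⁻¹).isUnit
      exact not_isUnit_zero h2
    have hjk : j * k ≡ 1 [MOD D] := by
      have h1 : ((j * k : ℕ) : ZMod D) = ((1 : ℕ) : ZMod D) := by
        rw [Nat.cast_mul, Nat.cast_one]
        have hj' : ((j : ℕ) : ZMod D) = ((ju : (ZMod D)ˣ) : ZMod D) :=
          (ZMod.coe_unitOfCoprime j hjco).symm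
        have hk' : ((k : ℕ) : ZMod D) = (((ju⁻¹ : (ZMod D)ˣ)) : ZMod D) := by
          rw [hk]; exact ZMod.natCast_rightInverse _
        rw [hj', hk', ← Units.val_mul, mul_inv_cancel, Units.val_one]
      exact (ZMod.natCast_eq_natCast_iff _ _ _).mp h1
    have hjk1 : 1 ≤ j * k := Nat.one_le_iff_ne_zero.mpr (mul_ne_zero (by omega) hk0)
    have hdvdD : D ∣ j * k - 1 := (Nat.modEq_iff_dvd' hjk1).mp hjk.symm
    obtain ⟨c, hcEq⟩ := hdvdD
    have hjkc : j * k = 1 + D * c := by omega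
    have hrel2 : InvAux.Rel f (((A ^ j) ^ k).val) ((D - 1) * m * k) :=
      InvAux.rel_pow f (A ^ j) _ hreljm k
    have hpowjk : (A ^ j) ^ k = A * (A ^ D) ^ c := by
      rw [← pow_mul, hjkc, pow_add, pow_one, pow_mul]
    have hscal : PGLAct.toPGL F ((A ^ D) ^ c) = 1 := by
      rw [map_pow, hAD, one_pow]
    obtain ⟨u, hu⟩ := (QuotientGroup.eq_one_iff _).mp hscal
    have hval : ((A ^ D) ^ c).val = Matrix.scalar (Fin 2) (u : F) := by
      rw [← hu]; rfl
    have hrel3 : InvAux.Rel f (A.val * Matrix.scalar (Fin 2) (u : F)) ((D - 1) * m * k) := by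
      rw [← hval, ← Units.val_mul, ← hpowjk]
      exact hrel2
    have hrelA : InvAux.Rel f A.val ((D - 1) * m * k) :=
      InvAux.rel_scalar_cancel f (u : F) u.ne_zero A.val _ hrel3
    refine ⟨((D - 1) * m * k) % f.natDegree, Nat.mod_lt _ (by omega), ?_⟩
    exact (InvAux.rel_mod f hf A.val _).mp hrelA
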